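/- For every k with 1 ≤ k ≤ n, the k-th elementary shifted symmetric polynomial e*_k(x₁,…,x_n) = ∑_{1 ≤ i₁ < i₂ < ⋯ < i_k ≤ n} (x_{i₁} + k − 1)(x_{i₂} + k − 2) ⋯ (x_{i_k}) is shifted symmetric, i.e., for each 1 ≤ i ≤ n − 1 it is invariant under replacing the pair (x_i, x_{i+1}) by (x_{i+1} − 1, x_i + 1). -/
import Mathlib

open scoped Classical

set_option maxHeartbeats 1000000

noncomputable def estar (n k : ℕ) (x : Fin n → ℂ) : ℂ :=
  ∑ i : Fin k → Fin n, if StrictMono i then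
    ∏ t : Fin k, (x (i t) + ((k : ℂ) - 1 - ((t : ℕ) : ℂ))) else 0

theorem stmt2 (n k : ℕ) (hk1 : 1 ≤ k) (hkn : k ≤ n) (x : Fin n → ℂ)
    (i : Fin n) (h : (i : ℕ) + 1 < n) :
    estar n k x = estar n k (fun j =>
      if j = i then x ⟨(i : ℕ) + 1, h⟩ - 1
      else if j = ⟨(i : ℕ) + 1, h⟩ then x i + 1
      else x j) := by
  classical
  set j2 : Fin n := ⟨(i : ℕ) + 1, h⟩ with hj2def
  set y : Fin n → ℂ := fun j => if j = i then x j2 - 1 else if j = j2 then x i + 1 else x j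
    with hydef
  have hij2 : i ≠ j2 := by
    intro hc
    have := congrArg Fin.val hc
    simp only [hj2def] at this
    omega
  have hyi : y i = x j2 - 1 := by simp [hydef]
  have hyj2 : y j2 = x i + 1 := by simp [hydef, hij2.symm, hij2]
  have hyo : ∀ j : Fin n, j ≠ i → j ≠ j2 → y j = x j := fun j h1 h2 => by
    simp [hydef, h1, h2]
  show estar n k x = estar n k y
  unfold estar
  rw [← sub_eq_zero, ← Finset.sum_sub_distrib]
  set c : Fin k → ℂ := fun t => (k : ℂ) - 1 - ((t : ℕ) : ℂ) with hcdef
  set sw : Equiv.Perm (Fin n) := Equiv.swap i j2 with hswdef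
  have hswi : sw i = j2 := Equiv.swap_apply_left _ _
  have hswj2 : sw j2 = i := Equiv.swap_apply_right _ _
  have hswo : ∀ j : Fin n, j ≠ i → j ≠ j2 → sw j = j := fun j h1 h2 =>
    Equiv.swap_apply_of_ne_of_ne h1 h2
  -- condition: both or neither of i, j2 in range
  set P : (Fin k → Fin n) → Prop := fun s => ((∃ t, s t = i) ↔ (∃ t, s t = j2)) with hPdef
  have hPsw : ∀ s : Fin k → Fin n, P (sw ∘ s) ↔ P s := by
    intro s
    have e1 : (∃ t, (sw ∘ s) t = i) ↔ (∃ t, s t = j2) := by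
      constructor
      · rintro ⟨t, ht⟩; exact ⟨t, by have := sw.injective (ht.trans hswj2.symm); exact this⟩
      · rintro ⟨t, ht⟩; exact ⟨t, by simp [Function.comp, ht, hswj2]⟩
    have e2 : (∃ t, (sw ∘ s) t = j2) ↔ (∃ t, s t = i) := by
      constructor
      · rintro ⟨t, ht⟩; exact ⟨t, by have := sw.injective (ht.trans hswi.symm); exact this⟩
      · rintro ⟨t, ht⟩; exact ⟨t, by simp [Function.comp, ht, hswi]⟩
    simp only [hPdef]
    rw [e1, e2]; tauto
  -- strict mono preservation
  have hmono : ∀ s : Fin k → Fin n, StrictMono s → ¬ P s → StrictMono (sw ∘ s) := by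
    intro s hs hP a b hab
    simp only [hPdef, not_iff] at hP
    have hinj := hs.injective
    have hvab := hs hab
    simp only [Function.comp]
    by_cases hi' : ∃ t, s t = i
    · have hj' : ¬ ∃ t, s t = j2 := by tauto
      obtain ⟨t0, ht0⟩ := hi'
      have hna : s a ≠ j2 := fun hc => hj' ⟨a, hc⟩
      have hnb : s b ≠ j2 := fun hc => hj' ⟨b, hc⟩
      by_cases hai : s a = i
      · have hbi : s b ≠ i := fun hc => (absurd (hinj (hai.trans hc.symm)) hab.ne)
        rw [hai, hswi, hswo _ hbi hnb]
        have h1 : (i : ℕ) < (s b : ℕ) := by rw [← hai]; exact hvab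
        have h2 : (s b : ℕ) ≠ (i : ℕ) + 1 := fun hc => hnb (by simp [hj2def, Fin.ext_iff, hc])
        simp only [Fin.lt_def, hj2def]; omega
      · rw [hswo _ hai hna]
        by_cases hbi : s b = i
        · rw [hbi, hswi]
          have h1 : (s a : ℕ) < (i : ℕ) := by rw [← hbi]; exact hvab
          simp only [Fin.lt_def, hj2def]; omega
        · rw [hswo _ hbi hnb]; exact hvab
    · have hj' : ∃ t, s t = j2 := by tauto
      have hna : s a ≠ i := fun hc => hi' ⟨a, hc⟩
      have hnb : s b ≠ i := fun hc => hi' ⟨b, hc⟩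
      by_cases haj : s a = j2
      · have hbj : s b ≠ j2 := fun hc => (absurd (hinj (haj.trans hc.symm)) hab.ne)
        rw [haj, hswj2, hswo _ hnb hbj]
        have h1 : ((i : ℕ) + 1) < (s b : ℕ) := by
          have := hvab; rw [haj] at this; simpa [hj2def, Fin.lt_def] using this
        simp only [Fin.lt_def]; omega
      · rw [hswo _ hna haj]
        by_cases hbj : s b = j2
        · rw [hbj, hswj2]
          have h1 : (s a : ℕ) < (i : ℕ) + 1 := by
            have := hvab; rw [hbj] at this; simpa [hj2def, Fin.lt_def] using this
          have h2 : (s a : ℕ) ≠ (i : ℕ) := fun hc => hna (Fin.ext hc)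
          simp only [Fin.lt_def]; omega
        · rw [hswo _ hnb hbj]; exact hvab
  -- key: if P s holds and s strict mono then F s = 0
  have key : ∀ s : Fin k → Fin n, StrictMono s → P s →
      ((if StrictMono s then ∏ t, (x (s t) + c t) else 0) -
        (if StrictMono s then ∏ t, (y (s t) + c t) else 0)) = 0 := by
    intro s hs hP
    simp only [if_pos hs, sub_eq_zero]
    by_cases hi' : ∃ t, s t = i
    · have hj' : ∃ t, s t = j2 := hP.mp hi'
      obtain ⟨t1, ht1⟩ := hi'
      obtain ⟨t2, ht2⟩ := hj'
      have ht12 : t1 < t2 := by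
        rw [← hs.lt_iff_lt]; rw [ht1, ht2]; simp [hj2def, Fin.lt_def]
      have hne12 : t2 ≠ t1 := ht12.ne'
      have hval : (t2 : ℕ) = (t1 : ℕ) + 1 := by
        by_contra hc
        have h1 : (t1 : ℕ) + 1 < (t2 : ℕ) := by
          have := ht12; rw [Fin.lt_def] at this; omega
        set tm : Fin k := ⟨(t1 : ℕ) + 1, lt_trans h1 t2.isLt⟩ with htm
        have hlt1 : s t1 < s tm := hs (by simp [Fin.lt_def, htm])
        have hlt2 : s tm < s t2 := hs (by simp [Fin.lt_def, htm]; omega)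
        rw [ht1] at hlt1; rw [ht2] at hlt2
        rw [Fin.lt_def] at hlt1 hlt2
        simp only [hj2def] at hlt2
        omega
      rw [← Finset.mul_prod_erase Finset.univ _ (Finset.mem_univ t1),
          ← Finset.mul_prod_erase _ _ (Finset.mem_erase.mpr ⟨hne12, Finset.mem_univ t2⟩),
          ← Finset.mul_prod_erase Finset.univ (fun t => y (s t) + c t) (Finset.mem_univ t1),
          ← Finset.mul_prod_erase _ (fun t => y (s t) + c t)
            (Finset.mem_erase.mpr ⟨hne12, Finset.mem_univ t2⟩)]
      have hrest : ∏ t ∈ (Finset.univ.erase t1).erase t2, (x (s t) + c t) =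
          ∏ t ∈ (Finset.univ.erase t1).erase t2, (y (s t) + c t) := by
        apply Finset.prod_congr rfl
        intro t ht
        simp only [Finset.mem_erase] at ht
        have h1 : s t ≠ i := fun hc => ht.2.1 (hs.injective (hc.trans ht1.symm))
        have h2 : s t ≠ j2 := fun hc => ht.1 (hs.injective (hc.trans ht2.symm))
        rw [hyo _ h1 h2]
      rw [← hrest]
      have hc2 : c t2 = c t1 - 1 := by simp [hcdef, hval]; push_cast; ring
      rw [ht1, ht2, hyi, hyj2, hc2]
      ring
    · have hj' : ¬ ∃ t, s t = j2 := fun hc => hi' (hP.mpr hc)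
      apply Finset.prod_congr rfl
      intro t _
      rw [hyo _ (fun hc => hi' ⟨t, hc⟩) (fun hc => hj' ⟨t, hc⟩)]
  -- the involution
  set σ : (Fin k → Fin n) → (Fin k → Fin n) := fun s => if P s then s else sw ∘ s with hσdef
  have hswsw : ∀ s : Fin k → Fin n, sw ∘ (sw ∘ s) = s := by
    intro s; funext t; simp [Function.comp, hswdef, Equiv.swap_apply_self]
  have hmono' : ∀ s : Fin k → Fin n, ¬ P s → (StrictMono (sw ∘ s) ↔ StrictMono s) := by
    intro s hP
    constructor
    · intro hm
      have := hmono (sw ∘ s) hm (by rw [hPsw]; exact hP)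
      rwa [hswsw] at this
    · intro hm; exact hmono s hm hP
  apply Finset.sum_ninvolution σ
  · intro s
    by_cases hP : P s
    · have hσ : σ s = s := if_pos hP
      rw [hσ]
      by_cases hs : StrictMono s
      · rw [key s hs hP]; ring
      · simp only [if_neg hs]; ring
    · have hσ : σ s = sw ∘ s := if_neg hP
      rw [hσ]
      by_cases hs : StrictMono s
      · have hs' : StrictMono (sw ∘ s) := hmono s hs hP
        simp only [if_pos hs, if_pos hs']
        -- exactly one of i, j2 in range s
        simp only [hPdef, not_iff] at hP
        have hmain : ∃ t0 : Fin k, (s t0 = i ∧ (¬ ∃ t, s t = j2)) ∨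
            (s t0 = j2 ∧ (¬ ∃ t, s t = i)) := by
          by_cases hi' : ∃ t, s t = i
          · obtain ⟨t0, ht0⟩ := hi'; exact ⟨t0, Or.inl ⟨ht0, by tauto⟩⟩
          · have : ∃ t, s t = j2 := by tauto
            obtain ⟨t0, ht0⟩ := this; exact ⟨t0, Or.inr ⟨ht0, hi'⟩⟩
        obtain ⟨t0, ht0⟩ := hmain
        have hoff : ∀ t : Fin k, t ≠ t0 → s t ≠ i ∧ s t ≠ j2 := by
          intro t ht
          rcases ht0 with ⟨h1, h2⟩ | ⟨h1, h2⟩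
          · exact ⟨fun hc => ht (hs.injective (hc.trans h1.symm)), fun hc => h2 ⟨t, hc⟩⟩
          · exact ⟨fun hc => h2 ⟨t, hc⟩, fun hc => ht (hs.injective (hc.trans h1.symm))⟩
        rw [← Finset.mul_prod_erase Finset.univ (fun t => x (s t) + c t) (Finset.mem_univ t0),
            ← Finset.mul_prod_erase Finset.univ (fun t => y (s t) + c t) (Finset.mem_univ t0),
            ← Finset.mul_prod_erase Finset.univ (fun t => x ((sw ∘ s) t) + c t)
              (Finset.mem_univ t0),
            ← Finset.mul_prod_erase Finset.univ (fun t => y ((sw ∘ s) t) + c t)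
              (Finset.mem_univ t0)]
        have hPr : ∀ (z : Fin n → ℂ), ∏ t ∈ Finset.univ.erase t0, (z ((sw ∘ s) t) + c t) =
            ∏ t ∈ Finset.univ.erase t0, (z (s t) + c t) := by
          intro z
          apply Finset.prod_congr rfl
          intro t ht
          have := hoff t (Finset.mem_erase.mp ht).1
          simp [Function.comp, hswo _ this.1 this.2]
        have hPry : ∏ t ∈ Finset.univ.erase t0, (y (s t) + c t) =
            ∏ t ∈ Finset.univ.erase t0, (x (s t) + c t) := by
          apply Finset.prod_congr rfl
          intro t ht
          have := hoff t (Finset.mem_erase.mp ht).1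
          rw [hyo _ this.1 this.2]
        rw [hPr x, hPr y, hPry]
        set A := ∏ t ∈ Finset.univ.erase t0, (x (s t) + c t)
        simp only [Function.comp]
        rcases ht0 with ⟨h1, _⟩ | ⟨h1, _⟩
        · rw [h1, hswi, hyi, hyj2]; ring
        · rw [h1, hswj2, hyi, hyj2]; ring
      · have hs' : ¬ StrictMono (sw ∘ s) := fun hc => hs ((hmono' s hP).mp hc)
        simp only [if_neg hs, if_neg hs']; ring
  · intro s hF
    by_cases hP : P s
    · exfalso; apply hF
      by_cases hs : StrictMono s
      · exact key s hs hP
      · simp [if_neg hs]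
    · have hσ : σ s = sw ∘ s := if_neg hP
      rw [hσ]
      intro hc
      simp only [hPdef, not_iff] at hP
      have : ∃ t0 : Fin k, s t0 = i ∨ s t0 = j2 := by
        by_cases hi' : ∃ t, s t = i
        · obtain ⟨t0, ht0⟩ := hi'; exact ⟨t0, Or.inl ht0⟩
        · have : ∃ t, s t = j2 := by tauto
          obtain ⟨t0, ht0⟩ := this; exact ⟨t0, Or.inr ht0⟩
      obtain ⟨t0, ht0⟩ := this
      have := congrFun hc t0
      simp only [Function.comp] at this
      rcases ht0 with h1 | h1
      · rw [h1, hswi] at this; exact hij2 this.symm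
      · rw [h1, hswj2] at this; exact hij2 this
  · intro s; exact Finset.mem_univ _
  · intro s
    by_cases hP : P s
    · simp [hσdef, if_pos hP]
    · have h1 : σ s = sw ∘ s := if_neg hP
      have h2 : ¬ P (sw ∘ s) := fun hc => hP ((hPsw s).mp hc)
      rw [h1, hσdef]; simp only [if_neg h2]; exact hswsw s
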